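/- Let n, d be positive integers, let s be an integer with 0 ≤ s ≤ n, let M = ∑_{q=1}^{d} C(n+q-1, q) and let P(s) = ∑_{q=1}^{d} C(s+q-1, q). Then P(s)/M ≤ s/n, i.e., n * P(s) ≤ s * M. -/

import Mathlib

-- identity: q * C(s+q-1, q) = s * C(s+q-1, q-1) for q = r+1
lemma mul_choose_id (t r : ℕ) :
    (r + 1) * Nat.choose (t + r + 1) (r + 1) = (t + 1) * Nat.choose (t + r + 1) r := by
  have h1 := Nat.add_one_mul_choose_eq (t + r) r
  have h2 := Nat.add_one_mul_choose_eq (t + r) t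
  have hsymm : Nat.choose (t + r + 1) (t + 1) = Nat.choose (t + r + 1) r := by
    have := Nat.choose_symm (show t + 1 ≤ t + r + 1 by omega)
    simpa [show t + r + 1 - (t + 1) = r by omega] using this.symm
  have hsymm2 : Nat.choose (t + r) t = Nat.choose (t + r) r := by
    have := Nat.choose_symm (show t ≤ t + r by omega)
    simpa [show t + r - t = r by omega] using this.symm
  -- h1 : (t+r+1) * C(t+r, r) = C(t+r+1, r+1) * (r+1)
  -- h2 : (t+r+1) * C(t+r, t) = C(t+r+1, t+1) * (t+1)
  rw [hsymm, hsymm2] at h2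
  linarith

lemma term_bound (n s q : ℕ) (hq : 1 ≤ q) (hs : s ≤ n) :
    n * Nat.choose (s + q - 1) q ≤ s * Nat.choose (n + q - 1) q := by
  obtain ⟨r, rfl⟩ : ∃ r, q = r + 1 := ⟨q - 1, by omega⟩
  rcases Nat.eq_zero_or_pos s with rfl | hs0
  · simp [Nat.choose_eq_zero_of_lt (by omega : r + 1 - 1 < r + 1)]
  obtain ⟨t, rfl⟩ : ∃ t, s = t + 1 := ⟨s - 1, by omega⟩
  obtain ⟨u, rfl⟩ : ∃ u, n = u + 1 := ⟨n - 1, by omega⟩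
  have h1 : t + 1 + (r + 1) - 1 = t + r + 1 := by omega
  have h2 : u + 1 + (r + 1) - 1 = u + r + 1 := by omega
  rw [h1, h2]
  have key : (r + 1) * ((u + 1) * Nat.choose (t + r + 1) (r + 1)) ≤
      (r + 1) * ((t + 1) * Nat.choose (u + r + 1) (r + 1)) := by
    calc (r + 1) * ((u + 1) * Nat.choose (t + r + 1) (r + 1))
        = (u + 1) * ((r + 1) * Nat.choose (t + r + 1) (r + 1)) := by ring
      _ = (u + 1) * ((t + 1) * Nat.choose (t + r + 1) r) := by rw [mul_choose_id]
      _ ≤ (u + 1) * ((t + 1) * Nat.choose (u + r + 1) r) := by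
          have := Nat.choose_le_choose r (show t + r + 1 ≤ u + r + 1 by omega)
          exact Nat.mul_le_mul_left _ (Nat.mul_le_mul_left _ this)
      _ = (t + 1) * ((u + 1) * Nat.choose (u + r + 1) r) := by ring
      _ = (t + 1) * ((r + 1) * Nat.choose (u + r + 1) (r + 1)) := by rw [mul_choose_id]
      _ = (r + 1) * ((t + 1) * Nat.choose (u + r + 1) (r + 1)) := by ring
  exact Nat.le_of_mul_le_mul_left key (by omega)

theorem lifted_sparsity_bound (n d s : ℕ) (hn : 0 < n) (hd : 0 < d) (hs : s ≤ n) :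
    n * ∑ q ∈ Finset.Icc 1 d, Nat.choose (s + q - 1) q ≤
      s * ∑ q ∈ Finset.Icc 1 d, Nat.choose (n + q - 1) q := by
  rw [Finset.mul_sum, Finset.mul_sum]
  apply Finset.sum_le_sum
  intro q hq
  exact term_bound n s q (Finset.mem_Icc.mp hq).1 hs
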